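/- Evaluation of name-free terms is invariant under model extension: if ξ ⪯* ξ′ (ξ′ is an extension of ξ obtained by adding values derivable from the current model), Γ₀ is a sub-context of the context typing ξ, M is a name-free term typed in Γ₀, and the names of V shared with ξ′ are already in ξ, then M derives V from Γ₀ in ξ if and only if M derives V from Γ₀ in ξ′. -/

import Mathlib

/-! Types of the ν-calculus: Unit, Bool, the name type Nm, products and arrows. -/
inductive Ty : Type
  | unit : Ty
  | bool : Ty
  | nm : Ty
  | prod : Ty → Ty → Ty
  | arrow : Ty → Ty → Ty
  deriving DecidableEq

/-! Terms of the ν-calculus, with named variables (names and variables are ℕ). -/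
inductive Tm : Type
  | var : ℕ → Tm
  | unit : Tm
  | tt : Tm
  | ff : Tm
  | name : ℕ → Tm
  | gensym : Tm
  | lam : ℕ → Ty → Tm → Tm
  | app : Tm → Tm → Tm
  | pair : Tm → Tm → Tm
  | fst : Tm → Tm
  | snd : Tm → Tm
  | cond : Tm → Tm → Tm → Tm
  | letin : ℕ → Tm → Tm → Tm
  | eq : Tm → Tm → Tm
  deriving DecidableEq

/-- The finite set of name constants occurring in a term. -/
def AN : Tm → Finset ℕ
  | .name r => {r}
  | .lam _ _ M => AN M
  | .app M N => AN M ∪ AN N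
  | .pair M N => AN M ∪ AN N
  | .fst M => AN M
  | .snd M => AN M
  | .cond M N₁ N₂ => AN M ∪ AN N₁ ∪ AN N₂
  | .letin _ M N => AN M ∪ AN N
  | .eq M N => AN M ∪ AN N
  | _ => ∅

/-- Free variables of a term. -/
def FV : Tm → Finset ℕ
  | .var x => {x}
  | .lam x _ M => FV M \ {x}
  | .app M N => FV M ∪ FV N
  | .pair M N => FV M ∪ FV N
  | .fst M => FV M
  | .snd M => FV M
  | .cond M N₁ N₂ => FV M ∪ FV N₁ ∪ FV N₂
  | .letin x M N => FV M ∪ (FV N \ {x})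
  | .eq M N => FV M ∪ FV N
  | _ => ∅

/-- Substitution of a closed term `V` for the variable `x` (no capture since `V` is closed). -/
def subst (x : ℕ) (V : Tm) : Tm → Tm
  | .var y => if y = x then V else .var y
  | .lam y α M => if y = x then .lam y α M else .lam y α (subst x V M)
  | .app M N => .app (subst x V M) (subst x V N)
  | .pair M N => .pair (subst x V M) (subst x V N)
  | .fst M => .fst (subst x V M)
  | .snd M => .snd (subst x V M)
  | .cond M N₁ N₂ => .cond (subst x V M) (subst x V N₁) (subst x V N₂)
  | .letin y M N => .letin y (subst x V M) (if y = x then N else subst x V N)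
  | .eq M N => .eq (subst x V M) (subst x V N)
  | t => t

/-- Values. -/
inductive IsValue : Tm → Prop
  | var : ∀ x, IsValue (.var x)
  | unit : IsValue .unit
  | tt : IsValue .tt
  | ff : IsValue .ff
  | name : ∀ r, IsValue (.name r)
  | gensym : IsValue .gensym
  | lam : ∀ x α M, IsValue (.lam x α M)
  | pair : ∀ {V W}, IsValue V → IsValue W → IsValue (.pair V W)

/-- Typing contexts: ordered lists of variable/type pairs, later entries more recent. -/
abbrev Ctx := List (ℕ × Ty)

/-- Look up the most recent binding of `x` in `Γ`. -/
def lookupVar (Γ : Ctx) (x : ℕ) : Option Ty :=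
  (Γ.reverse.find? (fun p => p.1 == x)).map Prod.snd

/-- Typing judgement `Γ ⊢ M : α` of the ν-calculus. -/
inductive Typed : Ctx → Tm → Ty → Prop
  | var : ∀ {Γ x α}, lookupVar Γ x = some α → Typed Γ (.var x) α
  | unit : ∀ {Γ}, Typed Γ .unit .unit
  | tt : ∀ {Γ}, Typed Γ .tt .bool
  | ff : ∀ {Γ}, Typed Γ .ff .bool
  | name : ∀ {Γ} (r : ℕ), Typed Γ (.name r) .nm
  | gensym : ∀ {Γ}, Typed Γ .gensym (.arrow .unit .nm)
  | lam : ∀ {Γ x α β M}, Typed (Γ ++ [(x, α)]) M β → Typed Γ (.lam x α M) (.arrow α β)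
  | app : ∀ {Γ M N α β}, Typed Γ M (.arrow α β) → Typed Γ N α → Typed Γ (.app M N) β
  | pair : ∀ {Γ M N α β}, Typed Γ M α → Typed Γ N β → Typed Γ (.pair M N) (.prod α β)
  | fst : ∀ {Γ M α β}, Typed Γ M (.prod α β) → Typed Γ (.fst M) α
  | snd : ∀ {Γ M α β}, Typed Γ M (.prod α β) → Typed Γ (.snd M) β
  | cond : ∀ {Γ M N₁ N₂ α}, Typed Γ M .bool → Typed Γ N₁ α → Typed Γ N₂ α →
      Typed Γ (.cond M N₁ N₂) α
  | letin : ∀ {Γ x M N α β}, Typed Γ M α → Typed (Γ ++ [(x, α)]) N β →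
      Typed Γ (.letin x M N) β
  | eqNm : ∀ {Γ M N}, Typed Γ M .nm → Typed Γ N .nm → Typed Γ (.eq M N) .bool
  | eqBool : ∀ {Γ M N}, Typed Γ M .bool → Typed Γ N .bool → Typed Γ (.eq M N) .bool

/-- Big-step call-by-value evaluation on configurations `(G, M) ⇓ (G', V)` where `G`
is the set of names generated so far. -/
inductive Eval : Finset ℕ → Tm → Finset ℕ → Tm → Prop
  | val : ∀ {G V}, IsValue V → Eval G V G V
  | app : ∀ {G G₁ G₂ G₃ M N B V W x α},
      Eval G M G₁ (.lam x α B) → Eval G₁ N G₂ W → IsValue W →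
      Eval G₂ (subst x W B) G₃ V → Eval G (.app M N) G₃ V
  | gensym : ∀ {G G₁ G₂ M N} (r : ℕ),
      Eval G M G₁ .gensym → Eval G₁ N G₂ .unit → r ∉ G₂ →
      Eval G (.app M N) (insert r G₂) (.name r)
  | pair : ∀ {G G₁ G₂ M N V W},
      Eval G M G₁ V → Eval G₁ N G₂ W → Eval G (.pair M N) G₂ (.pair V W)
  | fst : ∀ {G G₁ M V W}, Eval G M G₁ (.pair V W) → Eval G (.fst M) G₁ V
  | snd : ∀ {G G₁ M V W}, Eval G M G₁ (.pair V W) → Eval G (.snd M) G₁ W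
  | condT : ∀ {G G₁ G₂ M N₁ N₂ V},
      Eval G M G₁ .tt → Eval G₁ N₁ G₂ V → Eval G (.cond M N₁ N₂) G₂ V
  | condF : ∀ {G G₁ G₂ M N₁ N₂ V},
      Eval G M G₁ .ff → Eval G₁ N₂ G₂ V → Eval G (.cond M N₁ N₂) G₂ V
  | letin : ∀ {G G₁ G₂ M N W V x},
      Eval G M G₁ W → IsValue W → Eval G₁ (subst x W N) G₂ V →
      Eval G (.letin x M N) G₂ V
  | eqT : ∀ {G G₁ G₂ M N r},
      Eval G M G₁ (.name r) → Eval G₁ N G₂ (.name r) → Eval G (.eq M N) G₂ .tt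
  | eqF : ∀ {G G₁ G₂ M N r s},
      Eval G M G₁ (.name r) → Eval G₁ N G₂ (.name s) → r ≠ s →
      Eval G (.eq M N) G₂ .ff
  | eqBoolT : ∀ {G G₁ G₂ M N b},
      Eval G M G₁ b → Eval G₁ N G₂ b → (b = Tm.tt ∨ b = Tm.ff) →
      Eval G (.eq M N) G₂ .tt
  | eqBoolF : ∀ {G G₁ G₂ M N b₁ b₂},
      Eval G M G₁ b₁ → Eval G₁ N G₂ b₂ →
      ((b₁ = Tm.tt ∧ b₂ = Tm.ff) ∨ (b₁ = Tm.ff ∧ b₂ = Tm.tt)) →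
      Eval G (.eq M N) G₂ .ff

/-- Types not mentioning the name type `Nm`. -/
def NmFreeTy : Ty → Prop
  | .nm => False
  | .prod a b => NmFreeTy a ∧ NmFreeTy b
  | .arrow a b => NmFreeTy a ∧ NmFreeTy b
  | _ => True

/-- Base types β ::= Unit | Bool | β × β. -/
inductive BaseTy : Ty → Prop
  | unit : BaseTy .unit
  | bool : BaseTy .bool
  | prod : ∀ {a b}, BaseTy a → BaseTy b → BaseTy (.prod a b)

/-- Terms with no occurrence of `gensym`. -/
def NoGensym : Tm → Prop
  | .gensym => False
  | .lam _ _ M => NoGensym M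
  | .app M N => NoGensym M ∧ NoGensym N
  | .pair M N => NoGensym M ∧ NoGensym N
  | .fst M => NoGensym M
  | .snd M => NoGensym M
  | .cond M N₁ N₂ => NoGensym M ∧ NoGensym N₁ ∧ NoGensym N₂
  | .letin _ M N => NoGensym M ∧ NoGensym N
  | .eq M N => NoGensym M ∧ NoGensym N
  | _ => True

/-- Logical expressions: variables, constants, pairing and projections. -/
def IsExpr : Tm → Prop
  | .var _ => True
  | .unit => True
  | .tt => True
  | .ff => True
  | .pair e e' => IsExpr e ∧ IsExpr e'
  | .fst e => IsExpr e
  | .snd e => IsExpr e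
  | _ => False

def boolVal : Bool → Tm
  | true => .tt
  | false => .ff

/-- Contextual equivalence of closed terms `M, N` of type `α` with names in `G`:
every boolean-valued closing context (a term with one free variable, the hole)
with names in `G` evaluates `M` and `N` to the same boolean. -/
def CtxEquiv (G : Finset ℕ) (α : Ty) (M N : Tm) : Prop :=
  ∀ (h : ℕ) (C : Tm) (b : Bool), Typed [(h, α)] C .bool → AN C ⊆ G →
    ((∃ G', Eval G (subst h M C) G' (boolVal b)) ↔
     (∃ G', Eval G (subst h N C) G' (boolVal b)))

/-- Models: finite maps from variables to closed values, as ordered lists. -/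
abbrev Model := List (ℕ × Tm)

/-- All names occurring in a model. -/
def ANModel (ξ : Model) : Finset ℕ := ξ.foldr (fun p s => AN p.2 ∪ s) ∅

/-- Closure of a term by a model: substitute each binding. -/
def msubst (ξ : Model) (M : Tm) : Tm := ξ.foldl (fun N p => subst p.1 p.2 N) M

/-- Look up the value of `x` in the model `ξ`. -/
def modelLookup (ξ : Model) (x : ℕ) : Option Tm :=
  (ξ.reverse.find? (fun p => p.1 == x)).map Prod.snd

/-- A model is typed by a context when it binds the same variables, in order,
to closed values of the corresponding types. -/
inductive ModelTyped : Ctx → Model → Prop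
  | nil : ModelTyped [] []
  | cons : ∀ {Γ ξ x α V}, IsValue V → Typed [] V α → ModelTyped Γ ξ →
      ModelTyped ((x, α) :: Γ) ((x, V) :: ξ)

/-- Single-step model extension: add one binding `y : V` where `V` is derived
from the current model by a name-free term. -/
def ModelExt1 (p q : Ctx × Model) : Prop :=
  ∃ (y : ℕ) (α : Ty) (M V : Tm) (G' : Finset ℕ),
    q.1 = p.1 ++ [(y, α)] ∧ q.2 = p.2 ++ [(y, V)] ∧
    AN M = ∅ ∧ Typed p.1 M α ∧ IsValue V ∧
    Eval (ANModel p.2) (msubst p.2 M) G' V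

/-- Model extension `ξ ⪯* ξ′`: reflexive-transitive closure of single steps. -/
def ModelExt : Ctx × Model → Ctx × Model → Prop := Relation.ReflTransGen ModelExt1

lemma eval_subset {G G' : Finset ℕ} {M V : Tm} (h : Eval G M G' V) : G ⊆ G' := by
  induction h <;>
    solve_by_elim (maxDepth := 8) [Finset.Subset.trans, Finset.subset_insert,
      Finset.Subset.refl]

lemma union_chain {X A Y B G : Finset ℕ} (h1 : X ⊆ A ∪ G) (h2 : Y ⊆ B ∪ X) (h3 : A ⊆ B) :
    Y ⊆ B ∪ G := by
  intro a ha
  rcases Finset.mem_union.mp (h2 ha) with h | h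
  · exact Finset.mem_union_left _ h
  rcases Finset.mem_union.mp (h1 h) with h | h
  · exact Finset.mem_union_left _ (h3 h)
  · exact Finset.mem_union_right _ h

lemma eval_shrink {G Gf : Finset ℕ} {M V : Tm} (h : Eval G M Gf V) :
    ∀ G₀, G₀ ⊆ G → ∃ Gf', Gf' ⊆ Gf ∧ Gf ⊆ Gf' ∪ G ∧ G₀ ⊆ Gf' ∧ Eval G₀ M Gf' V := by
  induction h with
  | val hv =>
      intro G₀ h₀
      exact ⟨G₀, h₀, Finset.subset_union_right, Finset.Subset.refl _, Eval.val hv⟩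
  | app h1 h2 hW h3 ih1 ih2 ih3 =>
      intro G₀ h₀
      obtain ⟨A, hA1, hA2, hA3, hAe⟩ := ih1 G₀ h₀
      obtain ⟨B, hB1, hB2, hB3, hBe⟩ := ih2 A hA1
      obtain ⟨C, hC1, hC2, hC3, hCe⟩ := ih3 B hB1
      exact ⟨C, hC1, union_chain (union_chain hA2 hB2 hB3) hC2 hC3,
        (hA3.trans hB3).trans hC3, Eval.app hAe hBe hW hCe⟩
  | gensym r h1 h2 hr ih1 ih2 =>
      intro G₀ h₀
      obtain ⟨A, hA1, hA2, hA3, hAe⟩ := ih1 G₀ h₀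
      obtain ⟨B, hB1, hB2, hB3, hBe⟩ := ih2 A hA1
      refine ⟨insert r B, Finset.insert_subset_insert _ hB1, ?_,
        hA3.trans (hB3.trans (Finset.subset_insert _ _)),
        Eval.gensym r hAe hBe (fun hrB => hr (hB1 hrB))⟩
      have hchain := union_chain hA2 hB2 hB3
      intro a ha
      rcases Finset.mem_insert.mp ha with rfl | ha
      · exact Finset.mem_union_left _ (Finset.mem_insert_self _ _)
      rcases Finset.mem_union.mp (hchain ha) with h | h
      · exact Finset.mem_union_left _ (Finset.mem_insert_of_mem h)
      · exact Finset.mem_union_right _ h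
  | pair h1 h2 ih1 ih2 =>
      intro G₀ h₀
      obtain ⟨A, hA1, hA2, hA3, hAe⟩ := ih1 G₀ h₀
      obtain ⟨B, hB1, hB2, hB3, hBe⟩ := ih2 A hA1
      exact ⟨B, hB1, union_chain hA2 hB2 hB3, hA3.trans hB3, Eval.pair hAe hBe⟩
  | fst h1 ih =>
      intro G₀ h₀
      obtain ⟨A, hA1, hA2, hA3, hAe⟩ := ih G₀ h₀
      exact ⟨A, hA1, hA2, hA3, Eval.fst hAe⟩
  | snd h1 ih =>
      intro G₀ h₀
      obtain ⟨A, hA1, hA2, hA3, hAe⟩ := ih G₀ h₀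
      exact ⟨A, hA1, hA2, hA3, Eval.snd hAe⟩
  | condT h1 h2 ih1 ih2 =>
      intro G₀ h₀
      obtain ⟨A, hA1, hA2, hA3, hAe⟩ := ih1 G₀ h₀
      obtain ⟨B, hB1, hB2, hB3, hBe⟩ := ih2 A hA1
      exact ⟨B, hB1, union_chain hA2 hB2 hB3, hA3.trans hB3, Eval.condT hAe hBe⟩
  | condF h1 h2 ih1 ih2 =>
      intro G₀ h₀
      obtain ⟨A, hA1, hA2, hA3, hAe⟩ := ih1 G₀ h₀
      obtain ⟨B, hB1, hB2, hB3, hBe⟩ := ih2 A hA1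
      exact ⟨B, hB1, union_chain hA2 hB2 hB3, hA3.trans hB3, Eval.condF hAe hBe⟩
  | letin h1 hW h2 ih1 ih2 =>
      intro G₀ h₀
      obtain ⟨A, hA1, hA2, hA3, hAe⟩ := ih1 G₀ h₀
      obtain ⟨B, hB1, hB2, hB3, hBe⟩ := ih2 A hA1
      exact ⟨B, hB1, union_chain hA2 hB2 hB3, hA3.trans hB3, Eval.letin hAe hW hBe⟩
  | eqT h1 h2 ih1 ih2 =>
      intro G₀ h₀
      obtain ⟨A, hA1, hA2, hA3, hAe⟩ := ih1 G₀ h₀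
      obtain ⟨B, hB1, hB2, hB3, hBe⟩ := ih2 A hA1
      exact ⟨B, hB1, union_chain hA2 hB2 hB3, hA3.trans hB3, Eval.eqT hAe hBe⟩
  | eqF h1 h2 hne ih1 ih2 =>
      intro G₀ h₀
      obtain ⟨A, hA1, hA2, hA3, hAe⟩ := ih1 G₀ h₀
      obtain ⟨B, hB1, hB2, hB3, hBe⟩ := ih2 A hA1
      exact ⟨B, hB1, union_chain hA2 hB2 hB3, hA3.trans hB3, Eval.eqF hAe hBe hne⟩
  | eqBoolT h1 h2 hb ih1 ih2 =>
      intro G₀ h₀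
      obtain ⟨A, hA1, hA2, hA3, hAe⟩ := ih1 G₀ h₀
      obtain ⟨B, hB1, hB2, hB3, hBe⟩ := ih2 A hA1
      exact ⟨B, hB1, union_chain hA2 hB2 hB3, hA3.trans hB3, Eval.eqBoolT hAe hBe hb⟩
  | eqBoolF h1 h2 hb ih1 ih2 =>
      intro G₀ h₀
      obtain ⟨A, hA1, hA2, hA3, hAe⟩ := ih1 G₀ h₀
      obtain ⟨B, hB1, hB2, hB3, hBe⟩ := ih2 A hA1
      exact ⟨B, hB1, union_chain hA2 hB2 hB3, hA3.trans hB3, Eval.eqBoolF hAe hBe hb⟩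

lemma union_chain' {B A Gm G₀ Gn : Finset ℕ} (h1 : B ⊆ A ∪ Gn) (h2 : A ⊆ G₀ ∪ Gm)
    (h3 : Gm ⊆ Gn) : B ⊆ G₀ ∪ Gn := by
  intro a ha
  rcases Finset.mem_union.mp (h1 ha) with h | h
  · rcases Finset.mem_union.mp (h2 h) with h' | h'
    · exact Finset.mem_union_left _ h'
    · exact Finset.mem_union_right _ (h3 h')
  · exact Finset.mem_union_right _ h

lemma disj_step {G G₁ G₂ Gf G₀ A : Finset ℕ} (hGf : G₂ ⊆ Gf) (hGG₁ : G ⊆ G₁)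
    (hd : Disjoint (Gf \ G) G₀) (hA : A ⊆ G₀ ∪ G₁) : Disjoint (G₂ \ G₁) A := by
  refine Finset.disjoint_left.mpr fun a ha haA => ?_
  obtain ⟨haG₂, haG₁⟩ := Finset.mem_sdiff.mp ha
  rcases Finset.mem_union.mp (hA haA) with h | h
  · exact absurd h (Finset.disjoint_left.mp hd
      (Finset.mem_sdiff.mpr ⟨hGf haG₂, fun hg => haG₁ (hGG₁ hg)⟩))
  · exact haG₁ h

lemma eval_grow {G Gf : Finset ℕ} {M V : Tm} (h : Eval G M Gf V) :
    ∀ G₀, G ⊆ G₀ → Disjoint (Gf \ G) G₀ →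
    ∃ Gf', Gf ⊆ Gf' ∧ Gf' ⊆ G₀ ∪ Gf ∧ Eval G₀ M Gf' V := by
  induction h with
  | val hv =>
      intro G₀ h₀ _
      exact ⟨G₀, h₀, Finset.subset_union_left, Eval.val hv⟩
  | app h1 h2 hW h3 ih1 ih2 ih3 =>
      intro G₀ h₀ hd
      have s1 := eval_subset h1; have s2 := eval_subset h2; have s3 := eval_subset h3
      obtain ⟨A, hA1, hA2, hAe⟩ :=
        ih1 G₀ h₀ (disj_step (s2.trans s3) (Finset.Subset.refl _) hd Finset.subset_union_left)
      obtain ⟨B, hB1, hB2, hBe⟩ := ih2 A hA1 (disj_step s3 s1 hd hA2)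
      have hB2' := union_chain' hB2 hA2 s2
      obtain ⟨C, hC1, hC2, hCe⟩ :=
        ih3 B hB1 (disj_step (Finset.Subset.refl _) (s1.trans s2) hd hB2')
      exact ⟨C, hC1, union_chain' hC2 hB2' s3, Eval.app hAe hBe hW hCe⟩
  | gensym r h1 h2 hr ih1 ih2 =>
      intro G₀ h₀ hd
      have s1 := eval_subset h1; have s2 := eval_subset h2
      obtain ⟨A, hA1, hA2, hAe⟩ :=
        ih1 G₀ h₀ (disj_step (s2.trans (Finset.subset_insert _ _)) (Finset.Subset.refl _) hd
          Finset.subset_union_left)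
      obtain ⟨B, hB1, hB2, hBe⟩ := ih2 A hA1 (disj_step (Finset.subset_insert _ _) s1 hd hA2)
      have hB2' := union_chain' hB2 hA2 s2
      have hrG₀ : r ∉ G₀ := Finset.disjoint_left.mp hd
        (Finset.mem_sdiff.mpr ⟨Finset.mem_insert_self _ _, fun hg => hr (s2 (s1 hg))⟩)
      have hrB : r ∉ B := fun hb => by
        rcases Finset.mem_union.mp (hB2' hb) with h | h
        · exact hrG₀ h
        · exact hr h
      refine ⟨insert r B, Finset.insert_subset_insert _ hB1, ?_, Eval.gensym r hAe hBe hrB⟩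
      intro a ha
      rcases Finset.mem_insert.mp ha with rfl | ha
      · exact Finset.mem_union_right _ (Finset.mem_insert_self _ _)
      rcases Finset.mem_union.mp (hB2' ha) with h | h
      · exact Finset.mem_union_left _ h
      · exact Finset.mem_union_right _ (Finset.mem_insert_of_mem h)
  | pair h1 h2 ih1 ih2 =>
      intro G₀ h₀ hd
      have s1 := eval_subset h1; have s2 := eval_subset h2
      obtain ⟨A, hA1, hA2, hAe⟩ :=
        ih1 G₀ h₀ (disj_step s2 (Finset.Subset.refl _) hd Finset.subset_union_left)
      obtain ⟨B, hB1, hB2, hBe⟩ := ih2 A hA1 (disj_step (Finset.Subset.refl _) s1 hd hA2)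
      exact ⟨B, hB1, union_chain' hB2 hA2 s2, Eval.pair hAe hBe⟩
  | fst h1 ih =>
      intro G₀ h₀ hd
      obtain ⟨A, hA1, hA2, hAe⟩ := ih G₀ h₀ hd
      exact ⟨A, hA1, hA2, Eval.fst hAe⟩
  | snd h1 ih =>
      intro G₀ h₀ hd
      obtain ⟨A, hA1, hA2, hAe⟩ := ih G₀ h₀ hd
      exact ⟨A, hA1, hA2, Eval.snd hAe⟩
  | condT h1 h2 ih1 ih2 =>
      intro G₀ h₀ hd
      have s1 := eval_subset h1; have s2 := eval_subset h2
      obtain ⟨A, hA1, hA2, hAe⟩ :=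
        ih1 G₀ h₀ (disj_step s2 (Finset.Subset.refl _) hd Finset.subset_union_left)
      obtain ⟨B, hB1, hB2, hBe⟩ := ih2 A hA1 (disj_step (Finset.Subset.refl _) s1 hd hA2)
      exact ⟨B, hB1, union_chain' hB2 hA2 s2, Eval.condT hAe hBe⟩
  | condF h1 h2 ih1 ih2 =>
      intro G₀ h₀ hd
      have s1 := eval_subset h1; have s2 := eval_subset h2
      obtain ⟨A, hA1, hA2, hAe⟩ :=
        ih1 G₀ h₀ (disj_step s2 (Finset.Subset.refl _) hd Finset.subset_union_left)
      obtain ⟨B, hB1, hB2, hBe⟩ := ih2 A hA1 (disj_step (Finset.Subset.refl _) s1 hd hA2)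
      exact ⟨B, hB1, union_chain' hB2 hA2 s2, Eval.condF hAe hBe⟩
  | letin h1 hW h2 ih1 ih2 =>
      intro G₀ h₀ hd
      have s1 := eval_subset h1; have s2 := eval_subset h2
      obtain ⟨A, hA1, hA2, hAe⟩ :=
        ih1 G₀ h₀ (disj_step s2 (Finset.Subset.refl _) hd Finset.subset_union_left)
      obtain ⟨B, hB1, hB2, hBe⟩ := ih2 A hA1 (disj_step (Finset.Subset.refl _) s1 hd hA2)
      exact ⟨B, hB1, union_chain' hB2 hA2 s2, Eval.letin hAe hW hBe⟩
  | eqT h1 h2 ih1 ih2 =>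
      intro G₀ h₀ hd
      have s1 := eval_subset h1; have s2 := eval_subset h2
      obtain ⟨A, hA1, hA2, hAe⟩ :=
        ih1 G₀ h₀ (disj_step s2 (Finset.Subset.refl _) hd Finset.subset_union_left)
      obtain ⟨B, hB1, hB2, hBe⟩ := ih2 A hA1 (disj_step (Finset.Subset.refl _) s1 hd hA2)
      exact ⟨B, hB1, union_chain' hB2 hA2 s2, Eval.eqT hAe hBe⟩
  | eqF h1 h2 hne ih1 ih2 =>
      intro G₀ h₀ hd
      have s1 := eval_subset h1; have s2 := eval_subset h2
      obtain ⟨A, hA1, hA2, hAe⟩ :=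
        ih1 G₀ h₀ (disj_step s2 (Finset.Subset.refl _) hd Finset.subset_union_left)
      obtain ⟨B, hB1, hB2, hBe⟩ := ih2 A hA1 (disj_step (Finset.Subset.refl _) s1 hd hA2)
      exact ⟨B, hB1, union_chain' hB2 hA2 s2, Eval.eqF hAe hBe hne⟩
  | eqBoolT h1 h2 hb ih1 ih2 =>
      intro G₀ h₀ hd
      have s1 := eval_subset h1; have s2 := eval_subset h2
      obtain ⟨A, hA1, hA2, hAe⟩ :=
        ih1 G₀ h₀ (disj_step s2 (Finset.Subset.refl _) hd Finset.subset_union_left)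
      obtain ⟨B, hB1, hB2, hBe⟩ := ih2 A hA1 (disj_step (Finset.Subset.refl _) s1 hd hA2)
      exact ⟨B, hB1, union_chain' hB2 hA2 s2, Eval.eqBoolT hAe hBe hb⟩
  | eqBoolF h1 h2 hb ih1 ih2 =>
      intro G₀ h₀ hd
      have s1 := eval_subset h1; have s2 := eval_subset h2
      obtain ⟨A, hA1, hA2, hAe⟩ :=
        ih1 G₀ h₀ (disj_step s2 (Finset.Subset.refl _) hd Finset.subset_union_left)
      obtain ⟨B, hB1, hB2, hBe⟩ := ih2 A hA1 (disj_step (Finset.Subset.refl _) s1 hd hA2)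
      exact ⟨B, hB1, union_chain' hB2 hA2 s2, Eval.eqBoolF hAe hBe hb⟩

def rename (π : ℕ → ℕ) : Tm → Tm
  | .var x => .var x
  | .unit => .unit
  | .tt => .tt
  | .ff => .ff
  | .name r => .name (π r)
  | .gensym => .gensym
  | .lam x α M => .lam x α (rename π M)
  | .app M N => .app (rename π M) (rename π N)
  | .pair M N => .pair (rename π M) (rename π N)
  | .fst M => .fst (rename π M)
  | .snd M => .snd (rename π M)
  | .cond M N₁ N₂ => .cond (rename π M) (rename π N₁) (rename π N₂)
  | .letin x M N => .letin x (rename π M) (rename π N)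
  | .eq M N => .eq (rename π M) (rename π N)

lemma rename_subst (π : ℕ → ℕ) (x : ℕ) (W : Tm) (B : Tm) :
    rename π (subst x W B) = subst x (rename π W) (rename π B) := by
  induction B <;> simp [rename, subst, *] <;> split <;> simp [rename, subst, *]

lemma isValue_rename {π : ℕ → ℕ} {V : Tm} (h : IsValue V) : IsValue (rename π V) := by
  induction h with
  | pair _ _ ih1 ih2 => exact IsValue.pair ih1 ih2
  | var x => exact .var x
  | unit => exact .unit
  | tt => exact .tt
  | ff => exact .ff
  | name r => exact .name _
  | gensym => exact .gensym
  | lam x α M => exact .lam _ _ _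

lemma eval_rename {π : ℕ → ℕ} (hinj : Function.Injective π) {G Gf : Finset ℕ} {M V : Tm}
    (h : Eval G M Gf V) :
    Eval (G.image π) (rename π M) (Gf.image π) (rename π V) := by
  induction h with
  | val hv => exact .val (isValue_rename hv)
  | app h1 h2 hW h3 ih1 ih2 ih3 =>
      rw [rename_subst] at ih3
      exact Eval.app ih1 ih2 (isValue_rename hW) ih3
  | @gensym Ga G₁ G₂ Ma Na r h1 h2 hr ih1 ih2 =>
      have hnot : π r ∉ Finset.image π G₂ := by
        intro hmem
        obtain ⟨a, ha, hea⟩ := Finset.mem_image.mp hmem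
        exact hr (hinj hea ▸ ha)
      have := Eval.gensym (π r) ih1 ih2 hnot
      simpa [rename, Finset.image_insert] using this
  | pair h1 h2 ih1 ih2 => exact Eval.pair ih1 ih2
  | fst h1 ih => exact Eval.fst ih
  | snd h1 ih => exact Eval.snd ih
  | condT h1 h2 ih1 ih2 => exact Eval.condT ih1 ih2
  | condF h1 h2 ih1 ih2 => exact Eval.condF ih1 ih2
  | letin h1 hW h2 ih1 ih2 =>
      rw [rename_subst] at ih2
      exact Eval.letin ih1 (isValue_rename hW) ih2
  | eqT h1 h2 ih1 ih2 => exact Eval.eqT ih1 ih2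
  | eqF h1 h2 hne ih1 ih2 => exact Eval.eqF ih1 ih2 (fun e => hne (hinj e))
  | eqBoolT h1 h2 hb ih1 ih2 =>
      exact Eval.eqBoolT ih1 ih2 (by rcases hb with rfl | rfl <;> simp [rename])
  | eqBoolF h1 h2 hb ih1 ih2 =>
      refine Eval.eqBoolF ih1 ih2 ?_
      rcases hb with ⟨rfl, rfl⟩ | ⟨rfl, rfl⟩ <;> simp [rename]

lemma rename_fix {π : ℕ → ℕ} {t : Tm} (h : ∀ r ∈ AN t, π r = r) : rename π t = t := by
  induction t <;> simp_all [rename, AN]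

lemma image_fixed {π : ℕ → ℕ} {s : Finset ℕ} (h : ∀ a ∈ s, π a = a) : s.image π = s := by
  ext a
  simp only [Finset.mem_image]
  constructor
  · rintro ⟨b, hb, rfl⟩
    rw [h b hb]; exact hb
  · intro ha
    exact ⟨a, ha, h a ha⟩

lemma exists_perm (T : Finset ℕ) : ∀ (A C : Finset ℕ), Disjoint T A →
    ∃ π : Equiv.Perm ℕ, (∀ a ∈ A, π a = a) ∧ (∀ t ∈ T, π t ∉ C) := by
  induction T using Finset.induction_on with
  | empty => exact fun A C _ => ⟨1, by simp, by simp⟩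
  | @insert x T' hx ih =>
      intro A C hdisj
      have hdisj' : Disjoint T' (insert x A) := by
        rw [Finset.disjoint_insert_right]
        exact ⟨hx, (Finset.disjoint_insert_left.mp hdisj).2⟩
      obtain ⟨π', h1, h2⟩ := ih (insert x A) C hdisj'
      obtain ⟨f, hf⟩ := Infinite.exists_notMem_finset (C ∪ A ∪ {x} ∪ T'.image π')
      simp only [Finset.mem_union, Finset.mem_singleton, Finset.mem_image, not_or] at hf
      obtain ⟨⟨⟨hfC, hfA⟩, hfx⟩, hfT⟩ := hf
      have hπx : π' x = x := h1 x (Finset.mem_insert_self _ _)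
      refine ⟨π'.trans (Equiv.swap x f), ?_, ?_⟩
      · intro a ha
        have hax : a ≠ x := fun e =>
          (Finset.disjoint_insert_left.mp hdisj).1 (e ▸ ha)
        have haf : a ≠ f := fun e => hfA (e ▸ ha)
        simp [Equiv.trans_apply, h1 a (Finset.mem_insert_of_mem ha),
          Equiv.swap_apply_of_ne_of_ne hax haf]
      · intro t ht
        rcases Finset.mem_insert.mp ht with rfl | ht'
        · simpa [Equiv.trans_apply, hπx, Equiv.swap_apply_left] using hfC
        · have hπC := h2 t ht'
          simp only [Equiv.trans_apply]
          by_cases hcase : π' t = x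
          · rw [hcase]
            simpa [Equiv.swap_apply_left] using hfC
          · have hnf : π' t ≠ f := fun e => hfT ⟨t, ht', e⟩
            rw [Equiv.swap_apply_of_ne_of_ne hcase hnf]
            exact hπC

lemma typed_fv {Γ : Ctx} {M : Tm} {α : Ty} (h : Typed Γ M α) :
    FV M ⊆ (Γ.map Prod.fst).toFinset := by
  induction h with
  | @var Γ x α hlk =>
      intro a ha
      simp only [FV, Finset.mem_singleton] at ha
      subst ha
      unfold lookupVar at hlk
      cases hfind : (Γ.reverse.find? (fun p => p.1 == a)) with
      | none => rw [hfind] at hlk; simp at hlk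
      | some p =>
          have hmem := List.mem_of_find?_eq_some hfind
          have heq := List.find?_some hfind
          simp only [beq_iff_eq] at heq
          rw [List.mem_reverse] at hmem
          simp only [List.mem_toFinset, List.mem_map]
          exact ⟨p, hmem, heq⟩
  | unit => simp [FV]
  | tt => simp [FV]
  | ff => simp [FV]
  | name r => simp [FV]
  | gensym => simp [FV]
  | @lam Γ x α β M hM ih =>
      intro a ha
      simp only [FV, Finset.mem_sdiff, Finset.mem_singleton] at ha
      have := ih ha.1
      simp only [List.map_append, List.toFinset_append, Finset.mem_union,
        List.map_cons, List.map_nil, List.toFinset_cons, List.toFinset_nil] at this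
      rcases this with h | h
      · exact h
      · simp at h; exact absurd h ha.2
  | app h1 h2 ih1 ih2 => exact Finset.union_subset ih1 ih2
  | pair h1 h2 ih1 ih2 => exact Finset.union_subset ih1 ih2
  | fst h1 ih => exact ih
  | snd h1 ih => exact ih
  | cond h1 h2 h3 ih1 ih2 ih3 =>
      exact Finset.union_subset (Finset.union_subset ih1 ih2) ih3
  | @letin Γ x M N α β h1 h2 ih1 ih2 =>
      refine Finset.union_subset ih1 ?_
      intro a ha
      simp only [Finset.mem_sdiff, Finset.mem_singleton] at ha
      have := ih2 ha.1
      simp only [List.map_append, List.toFinset_append, Finset.mem_union,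
        List.map_cons, List.map_nil, List.toFinset_cons, List.toFinset_nil] at this
      rcases this with h | h
      · exact h
      · simp at h; exact absurd h ha.2
  | eqNm h1 h2 ih1 ih2 => exact Finset.union_subset ih1 ih2
  | eqBool h1 h2 ih1 ih2 => exact Finset.union_subset ih1 ih2

lemma fv_subst_subset (x : ℕ) (V M : Tm) (hV : FV V = ∅) :
    FV (subst x V M) ⊆ FV M \ {x} := by
  induction M with
  | var y =>
      by_cases h : y = x <;> simp [subst, FV, h, hV]
  | unit => simp [subst, FV]
  | tt => simp [subst, FV]
  | ff => simp [subst, FV]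
  | name r => simp [subst, FV]
  | gensym => simp [subst, FV]
  | lam y α M ih =>
      by_cases h : y = x
      · subst h
        simp only [subst, if_pos rfl, ↓reduceIte, FV]
        intro a ha
        simp only [Finset.mem_sdiff, Finset.mem_singleton] at *
        exact ⟨⟨ha.1, ha.2⟩, ha.2⟩
      · simp only [subst, if_neg h, FV]
        intro a ha
        simp only [Finset.mem_sdiff, Finset.mem_singleton] at *
        have := ih ha.1
        simp only [Finset.mem_sdiff, Finset.mem_singleton] at this
        exact ⟨⟨this.1, ha.2⟩, this.2⟩
  | app M N ihM ihN =>
      simp only [subst, FV]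
      intro a ha
      simp only [Finset.mem_union, Finset.mem_sdiff, Finset.mem_singleton] at *
      rcases ha with h | h
      · have := ihM h; simp only [Finset.mem_sdiff, Finset.mem_singleton] at this; tauto
      · have := ihN h; simp only [Finset.mem_sdiff, Finset.mem_singleton] at this; tauto
  | pair M N ihM ihN =>
      simp only [subst, FV]
      intro a ha
      simp only [Finset.mem_union, Finset.mem_sdiff, Finset.mem_singleton] at *
      rcases ha with h | h
      · have := ihM h; simp only [Finset.mem_sdiff, Finset.mem_singleton] at this; tauto
      · have := ihN h; simp only [Finset.mem_sdiff, Finset.mem_singleton] at this; tauto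
  | fst M ih => simpa [subst, FV] using ih
  | snd M ih => simpa [subst, FV] using ih
  | cond M N₁ N₂ ihM ih1 ih2 =>
      simp only [subst, FV]
      intro a ha
      simp only [Finset.mem_union, Finset.mem_sdiff, Finset.mem_singleton] at *
      rcases ha with (h | h) | h
      · have := ihM h; simp only [Finset.mem_sdiff, Finset.mem_singleton] at this; tauto
      · have := ih1 h; simp only [Finset.mem_sdiff, Finset.mem_singleton] at this; tauto
      · have := ih2 h; simp only [Finset.mem_sdiff, Finset.mem_singleton] at this; tauto
  | letin y M N ihM ihN =>
      by_cases h : y = x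
      · subst h
        simp only [subst, if_pos rfl, FV]
        intro a ha
        simp only [Finset.mem_union, Finset.mem_sdiff, Finset.mem_singleton] at *
        rcases ha with h | h
        · have := ihM h; simp only [Finset.mem_sdiff, Finset.mem_singleton] at this; tauto
        · tauto
      · simp only [subst, if_neg h, FV]
        intro a ha
        simp only [Finset.mem_union, Finset.mem_sdiff, Finset.mem_singleton] at *
        rcases ha with hh | hh
        · have := ihM hh; simp only [Finset.mem_sdiff, Finset.mem_singleton] at this; tauto
        · have := ihN hh.1; simp only [Finset.mem_sdiff, Finset.mem_singleton] at this; tauto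
  | eq M N ihM ihN =>
      simp only [subst, FV]
      intro a ha
      simp only [Finset.mem_union, Finset.mem_sdiff, Finset.mem_singleton] at *
      rcases ha with h | h
      · have := ihM h; simp only [Finset.mem_sdiff, Finset.mem_singleton] at this; tauto
      · have := ihN h; simp only [Finset.mem_sdiff, Finset.mem_singleton] at this; tauto

lemma subst_closed (x : ℕ) (V : Tm) {M : Tm} (h : x ∉ FV M) : subst x V M = M := by
  induction M with
  | var y =>
      simp only [FV, Finset.mem_singleton] at h
      simp [subst, Ne.symm h]
  | lam y α M ih =>
      by_cases hyx : y = x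
      · simp [subst, hyx]
      · simp only [FV, Finset.mem_sdiff, Finset.mem_singleton, not_and, not_not] at h
        have : x ∉ FV M := fun hm => hyx (h hm).symm
        simp [subst, hyx, ih this]
  | letin y M N ihM ihN =>
      simp only [FV, Finset.mem_union, not_or] at h
      by_cases hyx : y = x
      · simp [subst, hyx, ihM h.1]
      · have : x ∉ FV N := by
          have := h.2
          simp only [Finset.mem_sdiff, Finset.mem_singleton, not_and, not_not] at this
          exact fun hm => hyx (this hm).symm
        simp [subst, hyx, ihM h.1, ihN this]
  | _ => simp_all [subst, FV]

lemma msubst_nil (M : Tm) : msubst [] M = M := rfl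

lemma msubst_cons (p : ℕ × Tm) (ξ : Model) (M : Tm) :
    msubst (p :: ξ) M = msubst ξ (subst p.1 p.2 M) := rfl

lemma msubst_append (l₁ l₂ : Model) (M : Tm) :
    msubst (l₁ ++ l₂) M = msubst l₂ (msubst l₁ M) := by
  simp [msubst, List.foldl_append]

lemma msubst_of_closed (l : Model) {M : Tm} (h : FV M = ∅) : msubst l M = M := by
  induction l with
  | nil => rfl
  | cons p l ih =>
      rw [msubst_cons, subst_closed p.1 p.2 (by simp [h])]
      exact ih

lemma ANModel_cons (p : ℕ × Tm) (ξ : Model) : ANModel (p :: ξ) = AN p.2 ∪ ANModel ξ := rfl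

lemma ANModel_append (l₁ l₂ : Model) : ANModel (l₁ ++ l₂) = ANModel l₁ ∪ ANModel l₂ := by
  induction l₁ with
  | nil => simp [ANModel]
  | cons p l ih => simp [ANModel_cons, ih, Finset.union_assoc]

lemma an_subst (x : ℕ) (V M : Tm) : AN (subst x V M) ⊆ AN M ∪ AN V := by
  induction M with
  | var y =>
      by_cases h : y = x <;> simp [subst, AN, h]
  | unit => simp [subst, AN]
  | tt => simp [subst, AN]
  | ff => simp [subst, AN]
  | name r => simp [subst, AN]
  | gensym => simp [subst, AN]
  | lam y α M ih =>
      by_cases h : y = x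
      · simp [subst, AN, h]
      · simpa [subst, AN, h] using ih
  | app M N ihM ihN =>
      intro a ha
      simp only [subst, AN, Finset.mem_union] at ha ⊢
      rcases ha with h | h
      · rcases Finset.mem_union.mp (ihM h) with h' | h' <;> tauto
      · rcases Finset.mem_union.mp (ihN h) with h' | h' <;> tauto
  | pair M N ihM ihN =>
      intro a ha
      simp only [subst, AN, Finset.mem_union] at ha ⊢
      rcases ha with h | h
      · rcases Finset.mem_union.mp (ihM h) with h' | h' <;> tauto
      · rcases Finset.mem_union.mp (ihN h) with h' | h' <;> tauto
  | fst M ih => simpa [subst, AN] using ih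
  | snd M ih => simpa [subst, AN] using ih
  | cond M N₁ N₂ ihM ih1 ih2 =>
      intro a ha
      simp only [subst, AN, Finset.mem_union] at ha ⊢
      rcases ha with (h | h) | h
      · rcases Finset.mem_union.mp (ihM h) with h' | h' <;> tauto
      · rcases Finset.mem_union.mp (ih1 h) with h' | h' <;> tauto
      · rcases Finset.mem_union.mp (ih2 h) with h' | h' <;> tauto
  | letin y M N ihM ihN =>
      by_cases h : y = x
      · intro a ha
        simp only [subst, AN, if_pos h, Finset.mem_union] at ha ⊢
        rcases ha with hh | hh
        · rcases Finset.mem_union.mp (ihM hh) with h' | h' <;> tauto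
        · tauto
      · intro a ha
        simp only [subst, AN, if_neg h, Finset.mem_union] at ha ⊢
        rcases ha with hh | hh
        · rcases Finset.mem_union.mp (ihM hh) with h' | h' <;> tauto
        · rcases Finset.mem_union.mp (ihN hh) with h' | h' <;> tauto
  | eq M N ihM ihN =>
      intro a ha
      simp only [subst, AN, Finset.mem_union] at ha ⊢
      rcases ha with h | h
      · rcases Finset.mem_union.mp (ihM h) with h' | h' <;> tauto
      · rcases Finset.mem_union.mp (ihN h) with h' | h' <;> tauto

lemma an_msubst (ξ : Model) : ∀ M : Tm, AN (msubst ξ M) ⊆ AN M ∪ ANModel ξ := by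
  induction ξ with
  | nil => intro M; simp [msubst_nil, ANModel]
  | cons p ξ ih =>
      intro M
      rw [msubst_cons]
      refine (ih _).trans ?_
      intro a ha
      rw [ANModel_cons]
      rcases Finset.mem_union.mp ha with h | h
      · rcases Finset.mem_union.mp (an_subst p.1 p.2 M h) with h' | h'
        · exact Finset.mem_union_left _ h'
        · exact Finset.mem_union_right _ (Finset.mem_union_left _ h')
      · exact Finset.mem_union_right _ (Finset.mem_union_right _ h)

lemma model_closed {Γ : Ctx} {ξ : Model} (h : ModelTyped Γ ξ) :
    ∀ M : Tm, FV M ⊆ (Γ.map Prod.fst).toFinset → FV (msubst ξ M) = ∅ := by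
  induction h with
  | nil =>
      intro M hM
      simp only [List.map_nil, List.toFinset_nil] at hM
      rw [msubst_nil]
      exact Finset.subset_empty.mp hM
  | @cons Γ ξ x α V hV hT hMT ih =>
      intro M hM
      have hVfv : FV V = ∅ := by
        have := typed_fv hT
        simpa using Finset.subset_empty.mp (by simpa using this)
      rw [msubst_cons]
      apply ih
      refine (fv_subst_subset x V M hVfv).trans ?_
      intro a ha
      obtain ⟨haM, hax⟩ := Finset.mem_sdiff.mp ha
      have := hM haM
      simp only [List.map_cons, List.toFinset_cons, Finset.mem_insert] at this
      rcases this with h | h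
      · exact absurd h (Finset.notMem_singleton.mp hax)
      · exact h

lemma modelExt_snd {p q : Ctx × Model} (h : ModelExt p q) : ∃ l, q.2 = p.2 ++ l := by
  induction h with
  | refl => exact ⟨[], by simp⟩
  | tail _ hstep ih =>
      obtain ⟨l, hl⟩ := ih
      obtain ⟨y, α, Mm, Vv, G', _, h2, _⟩ := hstep
      exact ⟨l ++ [(y, Vv)], by rw [h2, hl, List.append_assoc]⟩

/-- Evaluation (derivation of a value by a name-free term over a
sub-context) is invariant under model extension, provided the names of `V` shared
with the extended model are already in the original one. -/
theorem derivation_invariant_under_model_extension :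
    ∀ (Γ Γ' Γ₀ : Ctx) (ξ ξ' : Model) (M V : Tm),
      ModelTyped Γ ξ → ModelExt (Γ, ξ) (Γ', ξ') → Γ₀.Sublist Γ →
      AN M = ∅ → (∃ α, Typed Γ₀ M α) →
      (AN V ∩ ANModel ξ' ⊆ ANModel ξ) →
      ((∃ G', Eval (ANModel ξ) (msubst ξ M) G' V) ↔
       (∃ G', Eval (ANModel ξ') (msubst ξ' M) G' V)) := by
  intro Γ Γ' Γ₀ ξ ξ' M V hMT hExt hSub hAN hTy hside
  obtain ⟨α, hTy⟩ := hTy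
  obtain ⟨l, hl⟩ := modelExt_snd hExt
  simp only at hl
  have hfvΓ : FV M ⊆ (Γ.map Prod.fst).toFinset := by
    refine (typed_fv hTy).trans ?_
    intro a ha
    simp only [List.mem_toFinset, List.mem_map] at ha ⊢
    obtain ⟨p, hp, he⟩ := ha
    exact ⟨p, hSub.subset hp, he⟩
  have hNfv : FV (msubst ξ M) = ∅ := model_closed hMT M hfvΓ
  have hξ'M : msubst ξ' M = msubst ξ M := by
    rw [hl, msubst_append, msubst_of_closed _ hNfv]
  have hGsub : ANModel ξ ⊆ ANModel ξ' := by
    rw [hl, ANModel_append]; exact Finset.subset_union_left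
  have hANN : AN (msubst ξ M) ⊆ ANModel ξ := by
    have := an_msubst ξ M
    rw [hAN] at this
    simpa using this
  constructor
  · rintro ⟨Gf, hev⟩
    have hdisj : Disjoint ((Gf \ ANModel ξ) \ AN V) (ANModel ξ ∪ AN V) := by
      rw [Finset.disjoint_left]
      intro a ha haA
      simp only [Finset.mem_sdiff] at ha
      rcases Finset.mem_union.mp haA with h | h
      · exact ha.1.2 h
      · exact ha.2 h
    obtain ⟨π, hfix, hmove⟩ :=
      exists_perm ((Gf \ ANModel ξ) \ AN V) (ANModel ξ ∪ AN V) (ANModel ξ') hdisj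
    have hinj : Function.Injective π := π.injective
    have hev' := eval_rename hinj hev
    have e1 : rename π (msubst ξ M) = msubst ξ M :=
      rename_fix (fun r hr => hfix r (Finset.mem_union_left _ (hANN hr)))
    have e2 : rename π V = V :=
      rename_fix (fun r hr => hfix r (Finset.mem_union_right _ hr))
    have e3 : (ANModel ξ).image π = ANModel ξ :=
      image_fixed (fun a ha => hfix a (Finset.mem_union_left _ ha))
    rw [e1, e2, e3] at hev'
    have hdisj2 : Disjoint (Gf.image π \ ANModel ξ) (ANModel ξ') := by
      rw [Finset.disjoint_left]
      intro a ha haC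
      obtain ⟨haI, haG⟩ := Finset.mem_sdiff.mp ha
      obtain ⟨s, hs, rfl⟩ := Finset.mem_image.mp haI
      by_cases h1 : s ∈ ANModel ξ
      · rw [hfix s (Finset.mem_union_left _ h1)] at haG
        exact haG h1
      by_cases h2 : s ∈ AN V
      · rw [hfix s (Finset.mem_union_right _ h2)] at haC haG
        exact haG (hside (Finset.mem_inter.mpr ⟨h2, haC⟩))
      · exact hmove s
          (Finset.mem_sdiff.mpr ⟨Finset.mem_sdiff.mpr ⟨hs, h1⟩, h2⟩) haC
    obtain ⟨Gf', _, _, hev''⟩ := eval_grow hev' (ANModel ξ') hGsub hdisj2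
    exact ⟨Gf', by rwa [hξ'M]⟩
  · rintro ⟨Gf, hev⟩
    rw [hξ'M] at hev
    obtain ⟨Gf', _, _, _, hev'⟩ := eval_shrink hev (ANModel ξ) hGsub
    exact ⟨Gf', hev'⟩
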